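/- Suppose the 2-category M admits Eilenberg–Moore construction and the Linton-type reflexive coequalizers π(g,Γ) : f^v.g.u^z → V(g,Γ) exist for all monad opfunctors and are preserved by horizontal composition. Then for every 2-cell ω : (h,Ξ) → (k,Θ) over vertical 1-cells (n,Φ), (g,Γ) in the double category Mnd(M) of monads, there exists a unique 2-cell Kω : V(g,Γ) ∘ H(h,Ξ) → H(k,Θ) ∘ V(n,Φ) in M such that Kω ∘ (π(g,Γ) ▷ H(h,Ξ)) equals the composite f^v.g.u^z.H(h,Ξ) = f^v.g.h.u^t → f^v.k.n.u^t → H(k,Θ).f^s.n.u^t → H(k,Θ).V(n,Φ) built from ω, HΘ, and π(n,Φ). -/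

import Mathlib

open CategoryTheory CategoryTheory.Limits

universe w w' v₁ v₂ v₃ v₄ u₁ u₂ u₃ u₄

/-- Suppose the ambient 2-category (here: of categories) admits
Eilenberg–Moore construction and the Linton type reflexive coequalizers
`π(g,Γ) : f^v ∘ g ∘ u^z ⟶ V(g,Γ)` exist for all monad opfunctors and are preserved by
horizontal composition.  Then for every 2-cell `ω : (h,Ξ) → (k,Θ)` over vertical 1-cells
`(n,Φ)`, `(g,Γ)` in the double category of monads, there exists a unique 2-cell
`Kω : V(g,Γ) ∘ H(h,Ξ) ⟶ H(k,Θ) ∘ V(n,Φ)` such that `Kω ∘ (π(g,Γ) ▷ H(h,Ξ))` equals the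
composite built from `ω`, `HΘ` and `π(n,Φ)`. -/
private lemma algEqToHom_f {C : Type*} [Category C] {T : CategoryTheory.Monad C}
    {X Y : T.Algebra} (e : X = Y) :
    (eqToHom e).f = eqToHom (congrArg Monad.Algebra.A e) := by subst e; simp

theorem stmt_15
    {A : Type u₁} {B : Type u₂} {C : Type u₃} {D : Type u₄}
    [Category.{v₁} A] [Category.{v₂} B] [Category.{v₃} C] [Category.{v₄} D]
    (t : CategoryTheory.Monad A) (s : CategoryTheory.Monad B)
    (z : CategoryTheory.Monad C) (v : CategoryTheory.Monad D)
    -- the horizontal 1-cells: monad functors `(h,Ξ) : (A,t) → (C,z)`, `(k,Θ) : (B,s) → (D,v)`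
    (h : A ⥤ C) (Ξ : h ⋙ z.toFunctor ⟶ t.toFunctor ⋙ h)
    (hΞmul : ∀ X : A, z.μ.app (h.obj X) ≫ Ξ.app X =
        z.map (Ξ.app X) ≫ Ξ.app (t.obj X) ≫ h.map (t.μ.app X))
    (hΞunit : ∀ X : A, z.η.app (h.obj X) ≫ Ξ.app X = h.map (t.η.app X))
    (k : B ⥤ D) (Θ : k ⋙ v.toFunctor ⟶ s.toFunctor ⋙ k)
    (hΘmul : ∀ X : B, v.μ.app (k.obj X) ≫ Θ.app X =
        v.map (Θ.app X) ≫ Θ.app (s.obj X) ≫ k.map (s.μ.app X))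
    (hΘunit : ∀ X : B, v.η.app (k.obj X) ≫ Θ.app X = k.map (s.η.app X))
    -- the vertical 1-cells: monad opfunctors `(n,Φ) : (A,t) → (B,s)`, `(g,Γ) : (C,z) → (D,v)`
    (n : A ⥤ B) (Φ : t.toFunctor ⋙ n ⟶ n ⋙ s.toFunctor)
    (hΦmul : ∀ X : A, n.map (t.μ.app X) ≫ Φ.app X =
        Φ.app (t.obj X) ≫ s.map (Φ.app X) ≫ s.μ.app (n.obj X))
    (hΦunit : ∀ X : A, n.map (t.η.app X) ≫ Φ.app X = s.η.app (n.obj X))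
    (g : C ⥤ D) (Γ : z.toFunctor ⋙ g ⟶ g ⋙ v.toFunctor)
    (hΓmul : ∀ X : C, g.map (z.μ.app X) ≫ Γ.app X =
        Γ.app (z.obj X) ≫ v.map (Γ.app X) ≫ v.μ.app (g.obj X))
    (hΓunit : ∀ X : C, g.map (z.η.app X) ≫ Γ.app X = v.η.app (g.obj X))
    -- the 2-cell `ω` of the double category of monads
    (ω : h ⋙ g ⟶ n ⋙ k)
    (hω : ∀ X : A, g.map (Ξ.app X) ≫ ω.app (t.obj X) ≫ k.map (Φ.app X) =
        Γ.app (h.obj X) ≫ v.map (ω.app X) ≫ Θ.app (n.obj X))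
    -- the Eilenberg–Moore liftings `H(h,Ξ)` and `H(k,Θ)`
    (Hh : t.Algebra ⥤ z.Algebra) (hHh : Hh ⋙ z.forget = t.forget ⋙ h)
    (hHh2 : ∀ a : t.Algebra, (Hh.obj a).a =
        z.map (eqToHom (Functor.congr_obj hHh a)) ≫ Ξ.app a.A ≫ h.map a.a ≫
          eqToHom (Functor.congr_obj hHh a).symm)
    (Hk : s.Algebra ⥤ v.Algebra) (hHk : Hk ⋙ v.forget = s.forget ⋙ k)
    (hHk2 : ∀ a : s.Algebra, (Hk.obj a).a =
        v.map (eqToHom (Functor.congr_obj hHk a)) ≫ Θ.app a.A ≫ k.map a.a ≫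
          eqToHom (Functor.congr_obj hHk a).symm)
    -- the Linton coequalizers `V(g,Γ)` and `V(n,Φ)`, preserved by horizontal composition
    (Vg : z.Algebra ⥤ v.Algebra) (πg : z.forget ⋙ g ⋙ v.free ⟶ Vg)
    (hwg : ∀ c : z.Algebra,
      v.free.map (g.map c.a) ≫ πg.app c =
        (v.free.map (Γ.app c.A) ≫ v.adj.counit.app (v.free.obj (g.obj c.A))) ≫ πg.app c)
    (hcolimg : ∀ c : z.Algebra, Nonempty (IsColimit (Cofork.ofπ (πg.app c) (hwg c))))
    (hpresg : ∀ {E : Type w} [Category.{w'} E] (K : v.Algebra ⥤ E) (c : z.Algebra),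
      Nonempty (IsColimit (K.mapCocone (Cofork.ofπ (πg.app c) (hwg c)))))
    (Vn : t.Algebra ⥤ s.Algebra) (πn : t.forget ⋙ n ⋙ s.free ⟶ Vn)
    (hwn : ∀ a : t.Algebra,
      s.free.map (n.map a.a) ≫ πn.app a =
        (s.free.map (Φ.app a.A) ≫ s.adj.counit.app (s.free.obj (n.obj a.A))) ≫ πn.app a)
    (hcolimn : ∀ a : t.Algebra, Nonempty (IsColimit (Cofork.ofπ (πn.app a) (hwn a))))
    (hpresn : ∀ {E : Type w} [Category.{w'} E] (K : s.Algebra ⥤ E) (a : t.Algebra),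
      Nonempty (IsColimit (K.mapCocone (Cofork.ofπ (πn.app a) (hwn a))))) :
    -- the unique 2-cell `Kω`
    ∃! Kω : Hh ⋙ Vg ⟶ Vn ⋙ Hk,
      ∀ a : t.Algebra,
        πg.app (Hh.obj a) ≫ Kω.app a =
          v.free.map (g.map (eqToHom (Functor.congr_obj hHh a))) ≫
            v.free.map (ω.app a.A) ≫
            (v.adj.homEquiv (k.obj (n.obj a.A)) (Hk.obj (s.free.obj (n.obj a.A)))).symm
              (k.map (s.η.app (n.obj a.A)) ≫
                eqToHom (Functor.congr_obj hHk (s.free.obj (n.obj a.A))).symm) ≫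
            Hk.map (πn.app a) := by

  classical
  -- the canonical comparison 2-cell `HΘ` at a free algebra
  set φ : ∀ N : B, (v.free.obj (k.obj N) ⟶ Hk.obj (s.free.obj N)) := fun N =>
    (v.adj.homEquiv (k.obj N) (Hk.obj (s.free.obj N))).symm
      (k.map (s.η.app N) ≫ eqToHom (Functor.congr_obj hHk (s.free.obj N)).symm) with hφdef
  -- underlying morphism of `Hk.map`
  have hHkf : ∀ {c c' : s.Algebra} (m : c ⟶ c'),
      (Hk.map m).f = eqToHom (Functor.congr_obj hHk c) ≫ k.map m.f ≫
        eqToHom (Functor.congr_obj hHk c').symm := by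
    intro c c' m
    have := Functor.congr_hom hHk m
    simp at this
    exact this
  have hHhf : ∀ {c c' : t.Algebra} (m : c ⟶ c'),
      (Hh.map m).f = eqToHom (Functor.congr_obj hHh c) ≫ h.map m.f ≫
        eqToHom (Functor.congr_obj hHh c').symm := by
    intro c c' m
    have := Functor.congr_hom hHh m
    simp at this
    exact this
  -- underlying form of `hwn`
  have hπnf : ∀ a : t.Algebra,
      s.map (n.map a.a) ≫ (πn.app a).f =
        s.map (Φ.app a.A) ≫ s.μ.app (n.obj a.A) ≫ (πn.app a).f := by
    intro a
    have := congrArg Monad.Algebra.Hom.f (hwn a)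
    erw [Monad.Algebra.comp_f, Monad.Algebra.comp_f, Monad.Algebra.comp_f] at this
    simp at this
    exact this.trans (Category.assoc _ _ _)
  -- underlying morphism of `φ`
  have hφf : ∀ N : B, (φ N).f =
      Θ.app N ≫ eqToHom (Functor.congr_obj hHk (s.free.obj N)).symm := by
    intro N
    simp only [hφdef, Adjunction.homEquiv_counit, Monad.Algebra.comp_f]
    rw [show (v.adj.counit.app (Hk.obj (s.free.obj N))).f = (Hk.obj (s.free.obj N)).a from by simp; rfl]
    have key : ∀ (P : D) (e : P = k.obj (s.obj N)) (a : v.obj P ⟶ P),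
        a = v.map (eqToHom e) ≫ Θ.app (s.obj N) ≫ k.map (s.μ.app N) ≫ eqToHom e.symm →
        v.map (k.map (s.η.app N) ≫ eqToHom e.symm) ≫ a = Θ.app N ≫ eqToHom e.symm := by
      rintro P rfl a rfl
      simp only [eqToHom_refl, Category.comp_id, CategoryTheory.Functor.map_id, Category.id_comp]
      rw [reassoc_of% (Θ.naturality (s.η.app N) : v.map (k.map (s.η.app N)) ≫ Θ.app (s.obj N) =
        Θ.app N ≫ k.map (s.map (s.η.app N))), ← k.map_comp, s.right_unit]
      simp
    exact key _ (Functor.congr_obj hHk (s.free.obj N)) _ (hHk2 (s.free.obj N))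
  -- `φ` is natural
  have hφnat : ∀ {N N' : B} (r : N ⟶ N'),
      v.free.map (k.map r) ≫ φ N' = φ N ≫ Hk.map (s.free.map r) := by
    intro N N' r
    apply Monad.Algebra.Hom.ext
    rw [Monad.Algebra.comp_f, Monad.Algebra.comp_f, hφf, hφf, hHkf]
    have key : ∀ (P P' : D) (e : P = k.obj (s.obj N)) (e' : P' = k.obj (s.obj N')),
        v.map (k.map r) ≫ Θ.app N' ≫ eqToHom e'.symm =
          (Θ.app N ≫ eqToHom e.symm) ≫ eqToHom e ≫ k.map (s.map r) ≫ eqToHom e'.symm := by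
      rintro P P' rfl rfl
      simp only [eqToHom_refl, Category.comp_id, Category.id_comp]
      exact Θ.naturality r
    exact key _ _ (Functor.congr_obj hHk (s.free.obj N)) (Functor.congr_obj hHk (s.free.obj N'))
  -- naturality helpers in convenient form
  have Θnat : ∀ {N N' : B} (u : N ⟶ N'),
      v.map (k.map u) ≫ Θ.app N' = Θ.app N ≫ k.map (s.map u) := fun u => Θ.naturality u
  have ωnat : ∀ {X Y : A} (u : X ⟶ Y),
      g.map (h.map u) ≫ ω.app Y = ω.app X ≫ k.map (n.map u) := fun u => ω.naturality u
  have Γnat : ∀ {X Y : C} (u : X ⟶ Y),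
      g.map (z.map u) ≫ Γ.app Y = Γ.app X ≫ v.map (g.map u) := fun u => Γ.naturality u
  have μnat : ∀ {X Y : D} (u : X ⟶ Y),
      v.map (v.map u) ≫ v.μ.app Y = v.μ.app X ≫ v.map u := fun u => v.μ.naturality u
  -- the candidate composite
  set q : ∀ a : t.Algebra, (v.free.obj (g.obj ((Hh.obj a).A)) ⟶ Hk.obj (Vn.obj a)) := fun a =>
    v.free.map (g.map (eqToHom (Functor.congr_obj hHh a))) ≫ v.free.map (ω.app a.A) ≫
      φ (n.obj a.A) ≫ Hk.map (πn.app a) with hqdef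
  -- the coequalizing property
  have hq : ∀ a : t.Algebra,
      v.free.map (g.map (Hh.obj a).a) ≫ q a =
        (v.free.map (Γ.app (Hh.obj a).A) ≫
          v.adj.counit.app (v.free.obj (g.obj (Hh.obj a).A))) ≫ q a := by
    intro a
    apply Monad.Algebra.Hom.ext
    have key : ∀ (P : C) (e : P = h.obj a.A) (α : z.obj P ⟶ P) (Q : D) (Y : B) (R : D)
        (eQ : Q = k.obj (s.obj (n.obj a.A))) (eR : R = k.obj Y)
        (φf : v.obj (k.obj (n.obj a.A)) ⟶ Q) (ρ : Q ⟶ R)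
        (cf : v.obj (v.obj (g.obj P)) ⟶ v.obj (g.obj P)) (π' : s.obj (n.obj a.A) ⟶ Y),
        α = z.map (eqToHom e) ≫ Ξ.app a.A ≫ h.map a.a ≫ eqToHom e.symm →
        φf = Θ.app (n.obj a.A) ≫ eqToHom eQ.symm →
        ρ = eqToHom eQ ≫ k.map π' ≫ eqToHom eR.symm →
        cf = v.μ.app (g.obj P) →
        s.map (n.map a.a) ≫ π' = s.map (Φ.app a.A) ≫ s.μ.app (n.obj a.A) ≫ π' →
        v.map (g.map α) ≫ v.map (g.map (eqToHom e)) ≫ v.map (ω.app a.A) ≫ φf ≫ ρ =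
          (v.map (Γ.app P) ≫ cf) ≫ v.map (g.map (eqToHom e)) ≫ v.map (ω.app a.A) ≫ φf ≫ ρ := by
      rintro P rfl α Q Y R rfl rfl φf ρ cf π' rfl rfl rfl rfl hπ'
      simp only [eqToHom_refl, CategoryTheory.Functor.map_id, Category.id_comp, Category.comp_id,
        Functor.map_comp, Category.assoc]
      have w1 : v.map (g.map (h.map a.a)) ≫ v.map (ω.app a.A) =
          v.map (ω.app (t.obj a.A)) ≫ v.map (k.map (n.map a.a)) :=
        (v.map_comp _ _).symm.trans ((congrArg v.map (ωnat a.a)).trans (v.map_comp _ _))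
      have w2 : v.map (k.map (n.map a.a)) ≫ Θ.app (n.obj a.A) =
          Θ.app (n.obj (t.obj a.A)) ≫ k.map (s.map (n.map a.a)) := Θnat _
      have w3 : k.map (s.map (n.map a.a)) ≫ k.map π' =
          k.map (s.map (Φ.app a.A)) ≫ k.map (s.μ.app (n.obj a.A)) ≫ k.map π' :=
        (k.map_comp _ _).symm.trans ((congrArg k.map hπ').trans ((k.map_comp _ _).trans
          (congrArg (k.map (s.map (Φ.app a.A)) ≫ ·) (k.map_comp _ _))))
      have w4 : v.map (v.map (ω.app a.A)) ≫ v.μ.app (k.obj (n.obj a.A)) =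
          v.μ.app (g.obj (h.obj a.A)) ≫ v.map (ω.app a.A) := μnat _
      have w5 : v.μ.app (k.obj (n.obj a.A)) ≫ Θ.app (n.obj a.A) =
          v.map (Θ.app (n.obj a.A)) ≫ Θ.app (s.obj (n.obj a.A)) ≫ k.map (s.μ.app (n.obj a.A)) :=
        hΘmul _
      have m3 : ∀ {X Y Z W : D} (a : X ⟶ Y) (b : Y ⟶ Z) (c : Z ⟶ W),
          v.map (a ≫ b ≫ c) = v.map a ≫ v.map b ≫ v.map c := fun a b c => by simp
      have w6 : v.map (Γ.app (h.obj a.A)) ≫ v.map (v.map (ω.app a.A)) ≫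
            v.map (Θ.app (n.obj a.A)) =
          v.map (g.map (Ξ.app a.A)) ≫ v.map (ω.app (t.obj a.A)) ≫ v.map (k.map (Φ.app a.A)) :=
        (m3 _ _ _).symm.trans ((congrArg v.map (hω a.A)).symm.trans (m3 _ _ _))
      have w7 : v.map (k.map (Φ.app a.A)) ≫ Θ.app (s.obj (n.obj a.A)) =
          Θ.app (n.obj (t.obj a.A)) ≫ k.map (s.map (Φ.app a.A)) := Θnat _
      erw [reassoc_of% w1, reassoc_of% w2, w3, ← reassoc_of% w4, reassoc_of% w5,
        reassoc_of% w6, reassoc_of% w7]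
    refine key _ (Functor.congr_obj hHh a) _ _ _ _ (Functor.congr_obj hHk (s.free.obj (n.obj a.A)))
      (Functor.congr_obj hHk (Vn.obj a)) _ _ _ _ (hHh2 a) (hφf _) (hHkf _) ?_ (hπnf a)
    simp; rfl
  refine ⟨{ app := fun a => Cofork.IsColimit.desc (hcolimg (Hh.obj a)).some (q a) (hq a)
            naturality := ?_ }, ?_, ?_⟩
  · intro a b m
    apply Cofork.IsColimit.hom_ext (hcolimg (Hh.obj a)).some
    have da : πg.app (Hh.obj a) ≫ Cofork.IsColimit.desc (hcolimg (Hh.obj a)).some (q a) (hq a)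
        = q a := Cofork.IsColimit.π_desc' (hcolimg (Hh.obj a)).some (q a) (hq a)
    have db : πg.app (Hh.obj b) ≫ Cofork.IsColimit.desc (hcolimg (Hh.obj b)).some (q b) (hq b)
        = q b := Cofork.IsColimit.π_desc' (hcolimg (Hh.obj b)).some (q b) (hq b)
    have pn : (z.forget ⋙ g ⋙ v.free).map (Hh.map m) ≫ πg.app (Hh.obj b) =
        πg.app (Hh.obj a) ≫ Vg.map (Hh.map m) := πg.naturality (Hh.map m)
    have key : ∀ (Pa Pb : C) (ea : Pa = h.obj a.A) (eb : Pb = h.obj b.A) (x : Pa ⟶ Pb),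
        x = eqToHom ea ≫ h.map m.f ≫ eqToHom eb.symm →
        g.map x ≫ g.map (eqToHom eb) ≫ ω.app b.A =
          g.map (eqToHom ea) ≫ ω.app a.A ≫ k.map (n.map m.f) := by
      rintro Pa Pb rfl rfl x rfl
      simp only [eqToHom_refl, CategoryTheory.Functor.map_id, Category.comp_id,
        Category.id_comp]
      exact ωnat m.f
    have e3 : g.map (Hh.map m).f ≫ g.map (eqToHom (Functor.congr_obj hHh b)) ≫ ω.app b.A
        = g.map (eqToHom (Functor.congr_obj hHh a)) ≫ ω.app a.A ≫ k.map (n.map m.f) :=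
      key _ _ (Functor.congr_obj hHh a) (Functor.congr_obj hHh b) _ (hHhf m)
    have f3 : ∀ {X Y Z W : D} (a : X ⟶ Y) (b : Y ⟶ Z) (c : Z ⟶ W),
        v.free.map (a ≫ b ≫ c) = v.free.map a ≫ v.free.map b ≫ v.free.map c :=
      fun a b c => by simp
    have L3 : v.free.map (g.map (Hh.map m).f) ≫
          v.free.map (g.map (eqToHom (Functor.congr_obj hHh b))) ≫ v.free.map (ω.app b.A) =
        v.free.map (g.map (eqToHom (Functor.congr_obj hHh a))) ≫ v.free.map (ω.app a.A) ≫
          v.free.map (k.map (n.map m.f)) :=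
      (f3 _ _ _).symm.trans ((congrArg v.free.map e3).trans (f3 _ _ _))
    have L4 : Hk.map (s.free.map (n.map m.f)) ≫ Hk.map (πn.app b) =
        Hk.map (πn.app a) ≫ Hk.map (Vn.map m) :=
      (Hk.map_comp _ _).symm.trans ((congrArg Hk.map (πn.naturality m)).trans (Hk.map_comp _ _))
    have KEY : (z.forget ⋙ g ⋙ v.free).map (Hh.map m) ≫ q b = q a ≫ Hk.map (Vn.map m) := by
      show v.free.map (g.map (Hh.map m).f) ≫
          (v.free.map (g.map (eqToHom (Functor.congr_obj hHh b))) ≫ v.free.map (ω.app b.A) ≫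
            φ (n.obj b.A) ≫ Hk.map (πn.app b)) =
        (v.free.map (g.map (eqToHom (Functor.congr_obj hHh a))) ≫ v.free.map (ω.app a.A) ≫
            φ (n.obj a.A) ≫ Hk.map (πn.app a)) ≫ Hk.map (Vn.map m)
      erw [reassoc_of% L3]
      erw [Category.assoc, Category.assoc]
      erw [reassoc_of% (hφnat (n.map m.f)), L4]
      exact ((Category.assoc _ _ _).trans (congrArg (_ ≫ ·) ((Category.assoc _ _ _).trans
        (congrArg (_ ≫ ·) (Category.assoc _ _ _))))).symm
    show πg.app (Hh.obj a) ≫ Vg.map (Hh.map m) ≫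
        Cofork.IsColimit.desc (hcolimg (Hh.obj b)).some (q b) (hq b) =
      πg.app (Hh.obj a) ≫ Cofork.IsColimit.desc (hcolimg (Hh.obj a)).some (q a) (hq a) ≫
        Hk.map (Vn.map m)
    exact (Category.assoc _ _ _).symm.trans ((congrArg (· ≫ _) pn.symm).trans
      (((Category.assoc _ _ _).trans (congrArg (_ ≫ ·) db)).trans (KEY.trans
        ((congrArg (· ≫ Hk.map (Vn.map m)) da.symm).trans (Category.assoc _ _ _)))))
  · intro a
    exact Cofork.IsColimit.π_desc' (hcolimg (Hh.obj a)).some (q a) (hq a)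
  · intro K' hK'
    apply NatTrans.ext
    funext a
    apply Cofork.IsColimit.hom_ext (hcolimg (Hh.obj a)).some
    have h1 := hK' a
    have h2 := Cofork.IsColimit.π_desc' (hcolimg (Hh.obj a)).some (q a) (hq a)
    exact h1.trans h2.symm
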